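/- Let τ > 1 and Λ > 1. There exists C = C(Λ, τ) > 0 such that for all c with 1 < c < Λ, one has (x + 1)^τ ≤ c·x^τ + C/(c-1)^(τ-1) for all x ≥ 1. -/

import Mathlib

open Real

-- chord lower bound for concave rpow on [1, Λ]
lemma aux_chord (Λ s c : ℝ) (hΛ : 1 < Λ) (hs : 0 < s) (hs1 : s < 1)
    (hc : 1 < c) (hcΛ : c < Λ) :
    (Λ ^ s - 1) / (Λ - 1) * (c - 1) ≤ c ^ s - 1 := by
  have hΛ1 : (0:ℝ) < Λ - 1 := by linarith
  set μ : ℝ := (c - 1) / (Λ - 1) with hμ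
  have hμ0 : 0 ≤ μ := div_nonneg (by linarith) (by linarith)
  have hμ1 : μ ≤ 1 := by
    rw [hμ, div_le_one hΛ1]; linarith
  have hcomb : (1 - μ) * 1 + μ * Λ = c := by
    rw [hμ]; field_simp; ring
  have hcon := (Real.strictConcaveOn_rpow hs hs1).concaveOn
  have h := hcon.2 (by simp : (1:ℝ) ∈ Set.Ici 0) (by simp [le_of_lt (lt_trans one_pos hΛ)] : Λ ∈ Set.Ici 0)
      (by linarith : (0:ℝ) ≤ 1 - μ) hμ0 (by ring)
  simp only [smul_eq_mul] at h
  rw [hcomb] at h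
  simp only [Real.one_rpow, mul_one] at h
  have : 1 - μ + μ * Λ ^ s ≤ c ^ s := by simpa using h
  have hexp : (Λ ^ s - 1) / (Λ - 1) * (c - 1) = μ * Λ ^ s - μ := by
    rw [hμ]; field_simp
  linarith

theorem stmt_1 (Λ τ : ℝ) (hΛ : 1 < Λ) (hτ : 1 < τ) :
    ∃ C : ℝ, 0 < C ∧ ∀ c : ℝ, 1 < c → c < Λ → ∀ x : ℝ, 1 ≤ x →
      (x + 1) ^ τ ≤ c * x ^ τ + C / (c - 1) ^ (τ - 1) := by
  have hτ1 : (0:ℝ) < τ - 1 := by linarith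
  set s : ℝ := 1 / (τ - 1) with hsdef
  have hs : 0 < s := by positivity
  have hΛs : 1 < Λ ^ s := by
    rw [Real.one_lt_rpow_iff (by linarith)]; left; exact ⟨hΛ, hs⟩
  set k : ℝ := min 1 ((Λ ^ s - 1) / (Λ - 1)) with hkdef
  have hk0 : 0 < k := by
    apply lt_min one_pos
    apply div_pos (by linarith) (by linarith)
  have hk1 : k ≤ 1 := min_le_left _ _
  refine ⟨Λ / k ^ (τ - 1), by positivity, ?_⟩
  intro c hc hcΛ x hx
  have hc0 : (0:ℝ) < c := by linarith
  have hc1 : (0:ℝ) < c - 1 := by linarith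
  set d : ℝ := c ^ s with hddef
  have hd1 : 1 < d := by
    rw [hddef, Real.one_lt_rpow_iff (le_of_lt hc0)]; left; exact ⟨hc, hs⟩
  have hd0 : (0:ℝ) < d := lt_trans one_pos hd1
  have hdm : (0:ℝ) < d - 1 := by linarith
  have hdpow : d ^ (τ - 1) = c := by
    rw [hddef, ← Real.rpow_mul (le_of_lt hc0), hsdef,
      one_div_mul_cancel (ne_of_gt hτ1), Real.rpow_one]
  -- convexity step
  have hconv := (convexOn_rpow (le_of_lt hτ)).2
    (Set.mem_Ici.2 (by positivity : (0:ℝ) ≤ d * x))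
    (Set.mem_Ici.2 (by positivity : (0:ℝ) ≤ d / (d - 1)))
    (by positivity : (0:ℝ) ≤ 1 / d)
    (by positivity : (0:ℝ) ≤ (d - 1) / d)
    (by field_simp; ring : 1 / d + (d - 1) / d = 1)
  have hcomb : (1 / d) • (d * x) + ((d - 1) / d) • (d / (d - 1)) = x + 1 := by
    simp only [smul_eq_mul]; field_simp
  rw [hcomb] at hconv
  simp only [smul_eq_mul] at hconv
  have hterm1 : 1 / d * (d * x) ^ τ = c * x ^ τ := by
    rw [Real.mul_rpow (le_of_lt hd0) (by linarith : (0:ℝ) ≤ x), ← hdpow,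
      Real.rpow_sub hd0, Real.rpow_one]
    field_simp
  have hterm2 : (d - 1) / d * (d / (d - 1)) ^ τ = c / (d - 1) ^ (τ - 1) := by
    rw [Real.div_rpow (le_of_lt hd0) (le_of_lt hdm), ← hdpow,
      Real.rpow_sub hd0, Real.rpow_sub hdm, Real.rpow_one, Real.rpow_one]
    have h1 : (d - 1 : ℝ) ^ τ ≠ 0 := by positivity
    have h2 : (d : ℝ) ^ τ ≠ 0 := by positivity
    field_simp
  rw [hterm1, hterm2] at hconv
  -- bound the remainder term
  have hkey : d - 1 ≥ k * (c - 1) := by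
    rcases le_or_gt 1 s with hs1 | hs1
    · have : c ^ (1:ℝ) ≤ c ^ s := by
        rw [Real.rpow_le_rpow_left_iff hc]; exact hs1
      rw [Real.rpow_one] at this
      nlinarith
    · have := aux_chord Λ s c hΛ hs hs1 hc hcΛ
      have hk2 : k ≤ (Λ ^ s - 1) / (Λ - 1) := min_le_right _ _
      nlinarith
  have hpow : (k * (c - 1)) ^ (τ - 1) ≤ (d - 1) ^ (τ - 1) :=
    Real.rpow_le_rpow (by positivity) hkey (le_of_lt hτ1)
  rw [Real.mul_rpow (le_of_lt hk0) (le_of_lt hc1)] at hpow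
  have hbound : c / (d - 1) ^ (τ - 1) ≤ Λ / k ^ (τ - 1) / (c - 1) ^ (τ - 1) := by
    rw [div_div]
    apply div_le_div₀ (le_of_lt (lt_trans hc1 (by linarith))) (le_of_lt hcΛ)
      (by positivity) hpow
  linarith
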